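/- Fix real numbers T1 < T2, an integer k ≥ 1, and let θ_k ∈ ℝ^k be defined by (θ_k)_i = T1 + i(T2−T1)/(k+1) for i = 1,…,k. Then the Dirichlet depth for a homogeneous Poisson process satisfies D_c(θ_k | k) = 1 = sup_{s ∈ S_k} D_c(s | k), and θ_k is the unique maximizer of D_c(· | k) over S_k. -/

import Mathlib

open MeasureTheory Filter Set

/-- Extended event sequence: `extSeq T1 T2 k s i` is `T1` for `i = 0`,
`s_(i)` for `1 ≤ i ≤ k` and `T2` for `i > k` (conventions `s_0 = T1`, `s_{k+1} = T2`). -/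
noncomputable def extSeq (T1 T2 : ℝ) (k : ℕ) (s : Fin k → ℝ) : ℕ → ℝ :=
  fun i => if h0 : i = 0 then T1 else if h : i ≤ k then s ⟨i - 1, by omega⟩ else T2

/-- The set of point-process realizations with `k` events on `[T1, T2]`:
ordered `k`-tuples `T1 ≤ s_1 ≤ ⋯ ≤ s_k ≤ T2`. -/
def Sk (T1 T2 : ℝ) (k : ℕ) : Set (Fin k → ℝ) :=
  {s | Monotone s ∧ (∀ i, T1 ≤ s i) ∧ (∀ i, s i ≤ T2)}

/-- The Dirichlet depth for a homogeneous Poisson process conditioned on `k` events. -/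
noncomputable def DcHPP (T1 T2 : ℝ) (k : ℕ) (s : Fin k → ℝ) : ℝ :=
  ((k : ℝ) + 1) * ∏ i ∈ Finset.range (k + 1),
    ((extSeq T1 T2 k s (i + 1) - extSeq T1 T2 k s i) / (T2 - T1)) ^ ((1 : ℝ) / ((k : ℝ) + 1))

/-- The general Dirichlet depth relative to a conditional mean vector `μ`. -/
noncomputable def DcGen (T1 T2 : ℝ) (k : ℕ) (μ : Fin k → ℝ) (s : Fin k → ℝ) : ℝ :=
  ∏ i ∈ Finset.range (k + 1),
    ((extSeq T1 T2 k s (i + 1) - extSeq T1 T2 k s i) /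
        (extSeq T1 T2 k μ (i + 1) - extSeq T1 T2 k μ i)) ^
      ((extSeq T1 T2 k μ (i + 1) - extSeq T1 T2 k μ i) / (T2 - T1))

/-- The time-rescaling-based Dirichlet depth relative to a cumulative intensity `Λ`. -/
noncomputable def DcTS (T1 T2 : ℝ) (k : ℕ) (Λ : ℝ → ℝ) (s : Fin k → ℝ) : ℝ :=
  ((k : ℝ) + 1) * ∏ i ∈ Finset.range (k + 1),
    ((Λ (extSeq T1 T2 k s (i + 1)) - Λ (extSeq T1 T2 k s i)) / Λ T2) ^ ((1 : ℝ) / ((k : ℝ) + 1))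

lemma extSeq_zero (T1 T2 : ℝ) (k : ℕ) (s : Fin k → ℝ) : extSeq T1 T2 k s 0 = T1 := by
  simp [extSeq]

lemma extSeq_top (T1 T2 : ℝ) (k : ℕ) (s : Fin k → ℝ) : extSeq T1 T2 k s (k+1) = T2 := by
  simp [extSeq]

lemma extSeq_mid (T1 T2 : ℝ) (k : ℕ) (s : Fin k → ℝ) (i : ℕ) (h1 : 1 ≤ i) (h2 : i ≤ k) :
    extSeq T1 T2 k s i = s ⟨i - 1, by omega⟩ := by
  simp [extSeq, Nat.one_le_iff_ne_zero.mp h1, h2]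

lemma sum_gaps (T1 T2 : ℝ) (k : ℕ) (s : Fin k → ℝ) :
    ∑ i ∈ Finset.range (k+1), (extSeq T1 T2 k s (i+1) - extSeq T1 T2 k s i) = T2 - T1 := by
  rw [Finset.sum_range_sub, extSeq_zero, extSeq_top]

lemma gaps_nonneg (T1 T2 : ℝ) (hT : T1 ≤ T2) (k : ℕ) (s : Fin k → ℝ) (hs : s ∈ Sk T1 T2 k)
    (i : ℕ) (hi : i ≤ k) : extSeq T1 T2 k s i ≤ extSeq T1 T2 k s (i+1) := by
  obtain ⟨hmono, hl, hu⟩ := hs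
  rcases Nat.eq_zero_or_pos i with rfl | h1
  · rw [extSeq_zero]
    rcases Nat.eq_zero_or_pos k with rfl | hk
    · rw [extSeq_top T1 T2 0 s]; exact hT
    · rw [extSeq_mid T1 T2 k s 1 le_rfl hk]; exact hl _
  · rcases eq_or_lt_of_le hi with rfl | hlt
    · rw [extSeq_top, extSeq_mid T1 T2 i s i h1 le_rfl]; exact hu _
    · rw [extSeq_mid T1 T2 k s i h1 hi, extSeq_mid T1 T2 k s (i+1) (by omega) hlt]
      exact hmono (by simp only [Fin.mk_le_mk]; omega)

lemma extSeq_theta (T1 T2 : ℝ) (k : ℕ) (θ : Fin k → ℝ)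
    (hθ : ∀ i : Fin k, θ i = T1 + ((i : ℝ) + 1) * (T2 - T1) / ((k : ℝ) + 1))
    (i : ℕ) (hi : i ≤ k + 1) :
    extSeq T1 T2 k θ i = T1 + (i : ℝ) * (T2 - T1) / ((k : ℝ) + 1) := by
  have hk1 : ((k : ℝ) + 1) ≠ 0 := by positivity
  rcases Nat.eq_zero_or_pos i with rfl | h1
  · simp [extSeq_zero]
  · rcases eq_or_lt_of_le hi with rfl | hlt
    · rw [extSeq_top]; push_cast; field_simp; ring
    · have hik : i ≤ k := by omega
      rw [extSeq_mid T1 T2 k θ i h1 hik, hθ]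
      congr 2
      simp only []
      push_cast [Nat.cast_sub h1]
      ring

lemma theta_gap (T1 T2 : ℝ) (k : ℕ) (θ : Fin k → ℝ)
    (hθ : ∀ i : Fin k, θ i = T1 + ((i : ℝ) + 1) * (T2 - T1) / ((k : ℝ) + 1))
    (i : ℕ) (hi : i ≤ k) :
    extSeq T1 T2 k θ (i+1) - extSeq T1 T2 k θ i = (T2 - T1) / ((k : ℝ) + 1) := by
  rw [extSeq_theta T1 T2 k θ hθ i (by omega), extSeq_theta T1 T2 k θ hθ (i+1) (by omega)]
  push_cast
  ring

theorem stmt4 (T1 T2 : ℝ) (h : T1 < T2) (k : ℕ) (hk : 1 ≤ k)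
    (θ : Fin k → ℝ)
    (hθ : ∀ i : Fin k, θ i = T1 + ((i : ℝ) + 1) * (T2 - T1) / ((k : ℝ) + 1)) :
    θ ∈ Sk T1 T2 k ∧
    DcHPP T1 T2 k θ = 1 ∧
    (∀ s ∈ Sk T1 T2 k, DcHPP T1 T2 k s ≤ 1) ∧
    (∀ s ∈ Sk T1 T2 k, DcHPP T1 T2 k s = 1 → s = θ) := by
  have hT : (0:ℝ) < T2 - T1 := by linarith
  have hk1 : (0:ℝ) < (k : ℝ) + 1 := by positivity
  -- θ ∈ Sk
  have hθSk : θ ∈ Sk T1 T2 k := by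
    refine ⟨?_, ?_, ?_⟩
    · intro a b hab
      rw [hθ a, hθ b]
      have hab' : ((a:ℝ)) ≤ (b:ℝ) := by exact_mod_cast hab
      gcongr
    · intro i
      rw [hθ i]
      have : 0 ≤ ((i:ℝ)+1) * (T2-T1) / ((k:ℝ)+1) := by positivity
      linarith
    · intro i
      rw [hθ i]
      have hik : (i:ℝ) < (k:ℝ) := by exact_mod_cast i.2
      have h1 : ((i:ℝ)+1) * (T2-T1) / ((k:ℝ)+1) ≤ T2 - T1 := by
        rw [div_le_iff₀ hk1]
        nlinarith
      linarith
  -- normalized gaps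
  have hzsum : ∀ s : Fin k → ℝ,
      ∑ i ∈ Finset.range (k+1), (extSeq T1 T2 k s (i+1) - extSeq T1 T2 k s i) / (T2 - T1) = 1 := by
    intro s
    rw [← Finset.sum_div, sum_gaps, div_self (ne_of_gt hT)]
  have hw : ∑ _i ∈ Finset.range (k+1), (1:ℝ)/((k:ℝ)+1) = 1 := by
    rw [Finset.sum_const, Finset.card_range, nsmul_eq_mul]
    push_cast
    field_simp
  -- value at θ
  have hθ1 : DcHPP T1 T2 k θ = 1 := by
    unfold DcHPP
    have hcongr : ∀ i ∈ Finset.range (k+1),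
        ((extSeq T1 T2 k θ (i+1) - extSeq T1 T2 k θ i) / (T2 - T1)) ^ ((1:ℝ)/((k:ℝ)+1))
        = ((1:ℝ)/((k:ℝ)+1)) ^ ((1:ℝ)/((k:ℝ)+1)) := by
      intro i hi
      rw [theta_gap T1 T2 k θ hθ i (Nat.lt_succ_iff.mp (Finset.mem_range.mp hi))]
      congr 1
      field_simp
    rw [Finset.prod_congr rfl hcongr, Finset.prod_const, Finset.card_range,
      ← Real.rpow_natCast (((1:ℝ)/((k:ℝ)+1)) ^ ((1:ℝ)/((k:ℝ)+1))) (k+1),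
      ← Real.rpow_mul (by positivity)]
    have he : (1:ℝ)/((k:ℝ)+1) * ((k+1 : ℕ) : ℝ) = 1 := by
      push_cast
      field_simp
    rw [he, Real.rpow_one]
    field_simp
  refine ⟨hθSk, hθ1, ?_, ?_⟩
  -- the AM-GM bound
  · intro s hs
    unfold DcHPP
    have hznn : ∀ i ∈ Finset.range (k+1),
        0 ≤ (extSeq T1 T2 k s (i+1) - extSeq T1 T2 k s i) / (T2 - T1) := by
      intro i hi
      have := gaps_nonneg T1 T2 h.le k s hs i (Nat.lt_succ_iff.mp (Finset.mem_range.mp hi))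
      have h2 : 0 ≤ extSeq T1 T2 k s (i+1) - extSeq T1 T2 k s i := by linarith
      positivity
    have hAM := Real.geom_mean_le_arith_mean_weighted (Finset.range (k+1))
      (fun _ => (1:ℝ)/((k:ℝ)+1))
      (fun i => (extSeq T1 T2 k s (i+1) - extSeq T1 T2 k s i) / (T2 - T1))
      (fun i _ => by positivity) hw hznn
    have hsum2 : ∑ i ∈ Finset.range (k+1),
        (1:ℝ)/((k:ℝ)+1) * ((extSeq T1 T2 k s (i+1) - extSeq T1 T2 k s i) / (T2 - T1))
        = 1/((k:ℝ)+1) := by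
      rw [← Finset.mul_sum, hzsum s, mul_one]
    rw [hsum2] at hAM
    calc ((k:ℝ)+1) * ∏ i ∈ Finset.range (k+1),
          ((extSeq T1 T2 k s (i+1) - extSeq T1 T2 k s i) / (T2 - T1)) ^ ((1:ℝ)/((k:ℝ)+1))
        ≤ ((k:ℝ)+1) * (1/((k:ℝ)+1)) := by
          exact mul_le_mul_of_nonneg_left hAM hk1.le
      _ = 1 := by field_simp
  -- uniqueness
  · intro s hs hDc
    set z : ℕ → ℝ := fun i => (extSeq T1 T2 k s (i+1) - extSeq T1 T2 k s i) / (T2 - T1) with hzdef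
    have hznn : ∀ i ∈ Finset.range (k+1), 0 ≤ z i := by
      intro i hi
      have := gaps_nonneg T1 T2 h.le k s hs i (Nat.lt_succ_iff.mp (Finset.mem_range.mp hi))
      have h2 : 0 ≤ extSeq T1 T2 k s (i+1) - extSeq T1 T2 k s i := by linarith
      simp only [hzdef]
      positivity
    have hP : ∏ i ∈ Finset.range (k+1), z i ^ ((1:ℝ)/((k:ℝ)+1)) = 1/((k:ℝ)+1) := by
      have : ((k:ℝ)+1) * ∏ i ∈ Finset.range (k+1), z i ^ ((1:ℝ)/((k:ℝ)+1)) = 1 := hDc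
      field_simp at this ⊢
      linarith
    have hzpos : ∀ i ∈ Finset.range (k+1), 0 < z i := by
      intro i hi
      rcases lt_or_eq_of_le (hznn i hi) with hpos | heq
      · exact hpos
      · exfalso
        have h0 : ∏ j ∈ Finset.range (k+1), z j ^ ((1:ℝ)/((k:ℝ)+1)) = 0 := by
          apply Finset.prod_eq_zero hi
          rw [← heq, Real.zero_rpow (by positivity)]
        rw [h0] at hP
        have : (0:ℝ) < 1/((k:ℝ)+1) := by positivity
        linarith
    -- take logs and use strict concavity
    have hlog : Real.log (∑ i ∈ Finset.range (k+1), ((1:ℝ)/((k:ℝ)+1)) • z i)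
        ≤ ∑ i ∈ Finset.range (k+1), ((1:ℝ)/((k:ℝ)+1)) • Real.log (z i) := by
      have hs1 : ∑ i ∈ Finset.range (k+1), ((1:ℝ)/((k:ℝ)+1)) • z i = 1/((k:ℝ)+1) := by
        simp only [smul_eq_mul]
        rw [← Finset.mul_sum, hzsum s, mul_one]
      have hs2 : ∑ i ∈ Finset.range (k+1), ((1:ℝ)/((k:ℝ)+1)) • Real.log (z i)
          = Real.log (1/((k:ℝ)+1)) := by
        calc ∑ i ∈ Finset.range (k+1), ((1:ℝ)/((k:ℝ)+1)) • Real.log (z i)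
            = ∑ i ∈ Finset.range (k+1), Real.log (z i ^ ((1:ℝ)/((k:ℝ)+1))) := by
              apply Finset.sum_congr rfl
              intro i hi
              rw [Real.log_rpow (hzpos i hi), smul_eq_mul]
          _ = Real.log (∏ i ∈ Finset.range (k+1), z i ^ ((1:ℝ)/((k:ℝ)+1))) :=
              (Real.log_prod (fun i hi =>
                ne_of_gt (Real.rpow_pos_of_pos (hzpos i hi) _))).symm
          _ = Real.log (1/((k:ℝ)+1)) := by rw [hP]
      rw [hs1, hs2]
    have hconst := strictConcaveOn_log_Ioi.eq_of_map_sum_eq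
      (fun i _ => by positivity : ∀ i ∈ Finset.range (k+1), (0:ℝ) < (1:ℝ)/((k:ℝ)+1))
      hw (fun i hi => Set.mem_Ioi.mpr (hzpos i hi)) hlog
    -- all z i equal, hence equal to 1/(k+1)
    have hzval : ∀ i ∈ Finset.range (k+1), z i = 1/((k:ℝ)+1) := by
      intro i hi
      have h0 : (0:ℕ) ∈ Finset.range (k+1) := Finset.mem_range.mpr (by omega)
      have hall : ∀ j ∈ Finset.range (k+1), z j = z 0 := fun j hj => hconst hj h0
      have hsum : ∑ j ∈ Finset.range (k+1), z j = 1 := hzsum s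
      rw [Finset.sum_congr rfl hall, Finset.sum_const, Finset.card_range, nsmul_eq_mul] at hsum
      have : z 0 = 1/((k:ℝ)+1) := by
        push_cast at hsum
        field_simp at hsum ⊢
        linear_combination hsum
      rw [hall i hi, this]
    have hgap : ∀ i ≤ k, extSeq T1 T2 k s (i+1) - extSeq T1 T2 k s i = (T2 - T1)/((k:ℝ)+1) := by
      intro i hi
      have := hzval i (Finset.mem_range.mpr (by omega))
      simp only [hzdef] at this
      field_simp at this
      rw [eq_div_iff (ne_of_gt hk1)]
      linear_combination this
    have hE : ∀ i ≤ k + 1, extSeq T1 T2 k s i = T1 + (i:ℝ) * (T2 - T1) / ((k:ℝ)+1) := by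
      intro i
      induction i with
      | zero => intro _; simp [extSeq_zero]
      | succ j ih =>
        intro hj
        have hjk : j ≤ k := by omega
        have := hgap j hjk
        rw [ih (by omega)] at this
        push_cast
        linear_combination this
    funext i
    have h1 : s i = extSeq T1 T2 k s (i.1 + 1) := by
      rw [extSeq_mid T1 T2 k s (i.1+1) (by omega) (by omega)]
      congr 1
    rw [h1, hE (i.1+1) (by omega), hθ i]
    push_cast
    ring
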